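/- arXiv:1601.02320 — 2 statements merged into one kernel-verified Lean document; each statement's English description precedes it below -/
import Mathlib

section
/- The F_p-linear map F_r → F_p^D sending a to the codeword c_a = (Tr(a x²))_{x ∈ D} is injective; equivalently, if a ∈ F_r satisfies Tr(a x²) = 0 for all x ∈ D then a = 0, so the code C_D has exactly p^m codewords and dimension m over F_p. -/
lemma key_lemma (p : ℕ) [Fact p.Prime] (hp2 : p ≠ 2)
    (F : Type) [Field F] [Fintype F] [Algebra (ZMod p) F] (a : F)
    (h : ∀ x : F, x ≠ 0 → IsSquare (Algebra.trace (ZMod p) F x) →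
        Algebra.trace (ZMod p) F x ≠ 0 → Algebra.trace (ZMod p) F (a * x ^ 2) = 0) :
    a = 0 := by
  haveI : FiniteDimensional (ZMod p) F := Module.Finite.of_finite
  have htr_ne : Algebra.trace (ZMod p) F ≠ 0 := Algebra.trace_ne_zero (ZMod p) F
  have hnd : ∀ b : F, (∀ z : F, Algebra.trace (ZMod p) F (b * z) = 0) → b = 0 := by
    intro b hb
    by_contra hb0
    apply htr_ne
    ext w
    have := hb (b⁻¹ * w)
    rwa [mul_inv_cancel_left₀ hb0] at this
  obtain ⟨w, hw⟩ : ∃ w : F, Algebra.trace (ZMod p) F w ≠ 0 := by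
    by_contra hc
    push_neg at hc
    exact htr_ne (LinearMap.ext fun w => hc w)
  obtain ⟨e, hTe⟩ : ∃ e : F, Algebra.trace (ZMod p) F e = 1 :=
    ⟨(Algebra.trace (ZMod p) F w)⁻¹ • w, by
      rw [map_smul, smul_eq_mul, inv_mul_cancel₀ hw]⟩
  have h2 : (2 : ZMod p) ≠ 0 := by
    intro hc
    have hdvd : p ∣ 2 := by
      have := (ZMod.natCast_eq_zero_iff 2 p).mp (by exact_mod_cast hc)
      exact this
    exact hp2 ((Nat.prime_dvd_prime_iff_eq (Fact.out) Nat.prime_two).mp hdvd)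
  have stepA : ∀ y : F, Algebra.trace (ZMod p) F y ≠ 0 →
      Algebra.trace (ZMod p) F (a * y ^ 2) = 0 := by
    intro y hy
    have hy0 : y ≠ 0 := by rintro rfl; simp at hy
    have hc0 : algebraMap (ZMod p) F (Algebra.trace (ZMod p) F y) ≠ 0 := by
      simpa using hy
    have hx := h (Algebra.trace (ZMod p) F y • y)
      (smul_ne_zero hy hy0)
      (by rw [map_smul, smul_eq_mul]; exact ⟨_, rfl⟩)
      (by rw [map_smul, smul_eq_mul]; exact mul_ne_zero hy hy)
    rw [smul_pow, mul_smul_comm, map_smul, smul_eq_mul] at hx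
    exact (mul_eq_zero.mp hx).resolve_left (pow_ne_zero _ hy)
  have stepB : ∀ y' : F, Algebra.trace (ZMod p) F y' = 1 →
      Algebra.trace (ZMod p) F (a * (e * y')) = 0 := by
    intro y' hy'
    have hs : Algebra.trace (ZMod p) F (a * (e + y') ^ 2) = 0 := by
      apply stepA
      rw [map_add, hTe, hy']
      convert h2 using 1
      norm_num
    have he2 : Algebra.trace (ZMod p) F (a * e ^ 2) = 0 :=
      stepA _ (by rw [hTe]; exact one_ne_zero)
    have hy2 : Algebra.trace (ZMod p) F (a * y' ^ 2) = 0 :=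
      stepA _ (by rw [hy']; exact one_ne_zero)
    have expand : a * (e + y') ^ 2 = a * e ^ 2 + a * y' ^ 2 + 2 • (a * (e * y')) := by
      rw [two_smul]; ring
    rw [expand, map_add, map_add, he2, hy2, map_nsmul] at hs
    simp only [zero_add, nsmul_eq_mul, Nat.cast_ofNat] at hs
    exact (mul_eq_zero.mp hs).resolve_left h2
  have hall : ∀ z : F, Algebra.trace (ZMod p) F (a * e * z) = 0 := by
    intro z
    have hTy' : Algebra.trace (ZMod p) F
        (z - algebraMap (ZMod p) F (Algebra.trace (ZMod p) F z - 1) * e) = 1 := by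
      rw [map_sub, ← Algebra.smul_def, map_smul, hTe, smul_eq_mul, mul_one]; ring
    have h1' := stepB _ hTy'
    have h2' : Algebra.trace (ZMod p) F (a * (e * e)) = 0 := by
      have := stepB e hTe
      rwa [← pow_two, pow_two] at this
    have hz : a * e * z = a * (e * (z - algebraMap (ZMod p) F (Algebra.trace (ZMod p) F z - 1) * e))
        + algebraMap (ZMod p) F (Algebra.trace (ZMod p) F z - 1) * (a * (e * e)) := by
      ring
    rw [hz, map_add, h1', ← Algebra.smul_def, map_smul, h2', smul_zero, add_zero]
  have hae : a * e = 0 := hnd _ hall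
  exact (mul_eq_zero.mp hae).resolve_right (by
    intro hc
    rw [hc, map_zero] at hTe
    exact one_ne_zero hTe.symm)

/-- The `F_p`-linear map `F_r → F_p^D`, `a ↦ (Tr(a x²))_{x ∈ D}`, is
injective; equivalently if `Tr(a x²) = 0` for all `x ∈ D` then `a = 0`; so the code
`C_D` has exactly `p^m` codewords and dimension `m` over `F_p`. -/
theorem stmt_2 (p m : ℕ) [Fact p.Prime] (hp2 : p ≠ 2) (hm : 2 ≤ m)
    (F : Type) [Field F] [Fintype F] [Algebra (ZMod p) F]
    (hcard : Fintype.card F = p ^ m) :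
    Function.Injective (fun a : F =>
        fun x : {x : F // x ≠ 0 ∧ IsSquare (Algebra.trace (ZMod p) F x) ∧
            Algebra.trace (ZMod p) F x ≠ 0} =>
          Algebra.trace (ZMod p) F (a * (x : F) ^ 2)) ∧
    (∀ a : F, (∀ x : F, x ≠ 0 → IsSquare (Algebra.trace (ZMod p) F x) →
        Algebra.trace (ZMod p) F x ≠ 0 → Algebra.trace (ZMod p) F (a * x ^ 2) = 0) →
        a = 0) ∧
    Set.ncard (Set.range (fun a : F =>
        fun x : {x : F // x ≠ 0 ∧ IsSquare (Algebra.trace (ZMod p) F x) ∧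
            Algebra.trace (ZMod p) F x ≠ 0} =>
          Algebra.trace (ZMod p) F (a * (x : F) ^ 2))) = p ^ m ∧
    Module.finrank (ZMod p)
      (LinearMap.range (LinearMap.pi
        (fun x : {x : F // x ≠ 0 ∧ IsSquare (Algebra.trace (ZMod p) F x) ∧
            Algebra.trace (ZMod p) F x ≠ 0} =>
          (Algebra.trace (ZMod p) F).comp (LinearMap.mulRight (ZMod p) ((x : F) ^ 2)))))
      = m := by
  haveI : FiniteDimensional (ZMod p) F := Module.Finite.of_finite
  have hkey := key_lemma p hp2 F
  have hinj : Function.Injective (fun a : F =>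
      fun x : {x : F // x ≠ 0 ∧ IsSquare (Algebra.trace (ZMod p) F x) ∧
          Algebra.trace (ZMod p) F x ≠ 0} =>
        Algebra.trace (ZMod p) F (a * (x : F) ^ 2)) := by
    intro a b hab
    have : a - b = 0 := by
      apply hkey
      intro x hx0 hxs hxt
      have := congrFun hab ⟨x, hx0, hxs, hxt⟩
      simp only at this
      rw [sub_mul, map_sub, this, sub_self]
    exact sub_eq_zero.mp this
  refine ⟨hinj, fun a ha => hkey a ha, ?_, ?_⟩
  · rw [← Nat.card_coe_set_eq, Nat.card_range_of_injective hinj,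
      Nat.card_eq_fintype_card, hcard]
  · have hLinj : Function.Injective (LinearMap.pi
        (fun x : {x : F // x ≠ 0 ∧ IsSquare (Algebra.trace (ZMod p) F x) ∧
            Algebra.trace (ZMod p) F x ≠ 0} =>
          (Algebra.trace (ZMod p) F).comp (LinearMap.mulRight (ZMod p) ((x : F) ^ 2)))) :=
      hinj
    rw [LinearMap.finrank_range_of_inj hLinj]
    have hc2 : Fintype.card F = p ^ Module.finrank (ZMod p) F := by
      have := Module.card_eq_pow_finrank (K := ZMod p) (V := F)
      rwa [ZMod.card] at this
    exact Nat.pow_right_injective (Fact.out : p.Prime).two_le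
      (hc2.symm.trans hcard)
end

section
/- Let a ∈ F_r^* with Tr(a^{−1}) = 0. Then for every ρ ∈ F_p^*, N(ρ) = N_1(ρ) = (p−1)p^{m−2}/2. Moreover, #{a ∈ F_r^* : Tr(a^{−1}) = 0} = p^{m−1} − 1. -/
open Finset

-- counts of nonzero squares / nonsquares in ZMod p
lemma aux_sq_count (p : ℕ) [Fact p.Prime] (hp2 : p ≠ 2) :
    (Finset.univ.filter (fun c : ZMod p => IsSquare c ∧ c ≠ 0)).card = (p - 1) / 2 ∧
    (Finset.univ.filter (fun c : ZMod p => ¬ IsSquare c)).card = (p - 1) / 2 := by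
  classical
  have hchar : ringChar (ZMod p) ≠ 2 := by
    rw [ZMod.ringChar_zmod_n]; exact hp2
  obtain ⟨g, hg⟩ := FiniteField.exists_nonsquare (F := ZMod p) hchar
  have hg0 : g ≠ 0 := fun h => hg (h ▸ ⟨0, by simp⟩)
  have hχg : quadraticChar (ZMod p) g = -1 :=
    quadraticChar_neg_one_iff_not_isSquare.mpr hg
  have hcard : (Finset.univ.filter (fun c : ZMod p => IsSquare c ∧ c ≠ 0)).card =
      (Finset.univ.filter (fun c : ZMod p => ¬ IsSquare c)).card := by
    apply Finset.card_bij' (fun x _ => g * x) (fun y _ => g⁻¹ * y)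
    · intro x hx
      simp only [mem_filter, mem_univ, true_and] at hx ⊢
      rw [← quadraticChar_neg_one_iff_not_isSquare, map_mul, hχg,
        (quadraticChar_one_iff_isSquare hx.2).mpr hx.1]; ring
    · intro y hy
      simp only [mem_filter, mem_univ, true_and] at hy ⊢
      have hy0 : y ≠ 0 := fun h => hy (h ▸ ⟨0, by simp⟩)
      have hχy : quadraticChar (ZMod p) y = -1 :=
        quadraticChar_neg_one_iff_not_isSquare.mpr hy
      have h0 : g⁻¹ * y ≠ 0 := by
        simp [hy0, hg0]
      refine ⟨?_, h0⟩
      rw [← quadraticChar_one_iff_isSquare h0]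
      have : quadraticChar (ZMod p) (g * (g⁻¹ * y)) = -1 := by
        rw [mul_inv_cancel_left₀ hg0 y]; exact hχy
      rw [map_mul, hχg] at this
      linarith
    · intro x _; rw [inv_mul_cancel_left₀ hg0]
    · intro y _; rw [mul_inv_cancel_left₀ hg0]
  have hsplit : (Finset.univ.filter (fun c : ZMod p => IsSquare c ∧ c ≠ 0)).card +
      (Finset.univ.filter (fun c : ZMod p => ¬ IsSquare c)).card = p - 1 := by
    rw [← Finset.card_union_of_disjoint]
    · have : (Finset.univ.filter (fun c : ZMod p => IsSquare c ∧ c ≠ 0)) ∪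
          (Finset.univ.filter (fun c : ZMod p => ¬ IsSquare c)) =
          Finset.univ.filter (fun c : ZMod p => c ≠ 0) := by
        ext c
        simp only [mem_union, mem_filter, mem_univ, true_and]
        constructor
        · rintro (⟨_, h⟩ | h)
          · exact h
          · exact fun h0 => h (h0 ▸ ⟨0, by simp⟩)
        · intro h
          by_cases hs : IsSquare c
          · exact Or.inl ⟨hs, h⟩
          · exact Or.inr hs
      rw [this]
      have : (Finset.univ.filter (fun c : ZMod p => c ≠ 0)) = Finset.univ.erase 0 := by
        ext c; simp [Finset.mem_erase, and_comm]
      rw [this, Finset.card_erase_of_mem (mem_univ _), Finset.card_univ, ZMod.card]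
    · rw [Finset.disjoint_filter]
      rintro c _ ⟨hs, _⟩ hn
      exact hn hs
  have hodd : p % 2 = 1 := Nat.odd_iff.mp ((Fact.out : p.Prime).odd_of_ne_two hp2)
  omega

section
variable (p m : ℕ) [Fact p.Prime] (F : Type) [Field F] [Fintype F] [Algebra (ZMod p) F]

lemma aux_trace_surj : Function.Surjective (Algebra.trace (ZMod p) F) := by
  haveI : Module.Finite (ZMod p) F := Module.Finite.of_finite
  exact Algebra.trace_surjective (ZMod p) F

lemma aux_fiber_card (hm : 1 ≤ m) (hcard : Fintype.card F = p ^ m) (c : ZMod p) :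
    (Finset.univ.filter (fun x : F => Algebra.trace (ZMod p) F x = c)).card = p ^ (m - 1) := by
  classical
  set T := Algebra.trace (ZMod p) F with hT
  have heq : ∀ c' : ZMod p,
      (Finset.univ.filter (fun x : F => T x = c')).card =
      (Finset.univ.filter (fun x : F => T x = c)).card := by
    intro c'
    obtain ⟨d, hd⟩ := aux_trace_surj p F (c - c')
    apply Finset.card_bij' (fun x _ => x + d) (fun y _ => y - d)
    · intro x hx
      simp only [mem_filter, mem_univ, true_and] at hx ⊢
      rw [map_add, hx, hd]; ring
    · intro y hy
      simp only [mem_filter, mem_univ, true_and] at hy ⊢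
      rw [map_sub, hy, hd]; ring
    · intro x _; ring
    · intro y _; ring
  have hsum : Fintype.card F = ∑ c' : ZMod p,
      (Finset.univ.filter (fun x : F => T x = c')).card := by
    rw [← Finset.card_univ]
    exact Finset.card_eq_sum_card_fiberwise (fun x _ => mem_univ _)
  rw [hcard] at hsum
  simp_rw [heq] at hsum
  rw [Finset.sum_const, Finset.card_univ, ZMod.card, smul_eq_mul] at hsum
  have hp := (Fact.out : p.Prime).pos
  have : p ^ m = p * p ^ (m - 1) := by
    conv_lhs => rw [show m = 1 + (m - 1) by omega]
    rw [pow_add, pow_one]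
  rw [this] at hsum
  exact (Nat.eq_of_mul_eq_mul_left hp hsum.symm)

lemma aux_A_card (hp2 : p ≠ 2) (hm : 2 ≤ m) (hcard : Fintype.card F = p ^ m) (a : F) (ha : a ≠ 0)
    (h0 : Algebra.trace (ZMod p) F a⁻¹ = 0) (c : ZMod p) (hc : c ≠ 0) (ρ : ZMod p) :
    (Finset.univ.filter (fun x : F => Algebra.trace (ZMod p) F x = c ∧
      Algebra.trace (ZMod p) F (a * x ^ 2) = ρ)).card = p ^ (m - 2) := by
  classical
  set T := Algebra.trace (ZMod p) F with hT
  have h2 : (2 : ZMod p) ≠ 0 := by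
    have : ((2 : ℕ) : ZMod p) ≠ 0 := by
      rw [Ne, ZMod.natCast_eq_zero_iff]
      intro h
      exact hp2 ((Nat.prime_dvd_prime_iff_eq (Fact.out : p.Prime) Nat.prime_two).mp h)
    exact_mod_cast this
  -- key trace computation
  have key : ∀ (s : ZMod p) (x : F), T x = c →
      T (a * (x + algebraMap (ZMod p) F s * a⁻¹) ^ 2) = T (a * x ^ 2) + 2 * s * c := by
    intro s x hx
    have hexp : a * (x + algebraMap (ZMod p) F s * a⁻¹) ^ 2 =
        a * x ^ 2 + algebraMap (ZMod p) F (2 * s) * x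
          + algebraMap (ZMod p) F (s ^ 2) * a⁻¹ := by
      push_cast [map_mul, map_ofNat, map_pow]
      field_simp
      ring
    rw [hexp, map_add, map_add]
    have e1 : T (algebraMap (ZMod p) F (2 * s) * x) = 2 * s * T x := by
      rw [← Algebra.smul_def, map_smul, smul_eq_mul]
    have e2 : T (algebraMap (ZMod p) F (s ^ 2) * a⁻¹) = s ^ 2 * T a⁻¹ := by
      rw [← Algebra.smul_def, map_smul, smul_eq_mul]
    rw [e1, e2, hx, hT] at *
    rw [h0]
    ring
  -- all ρ give the same count
  have heq : ∀ ρ' : ZMod p,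
      (Finset.univ.filter (fun x : F => T x = c ∧ T (a * x ^ 2) = ρ')).card =
      (Finset.univ.filter (fun x : F => T x = c ∧ T (a * x ^ 2) = ρ)).card := by
    intro ρ'
    set s : ZMod p := (ρ - ρ') / (2 * c) with hs
    have hsc : 2 * s * c = ρ - ρ' := by
      field_simp [hs]
      rw [hs, mul_comm 2, mul_assoc, div_mul_cancel₀ _ (mul_ne_zero h2 hc)]
    apply Finset.card_bij' (fun x _ => x + algebraMap (ZMod p) F s * a⁻¹)
      (fun y _ => y + algebraMap (ZMod p) F (-s) * a⁻¹)
    · intro x hx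
      simp only [mem_filter, mem_univ, true_and] at hx ⊢
      obtain ⟨hx1, hx2⟩ := hx
      constructor
      · rw [map_add, hx1, ← Algebra.smul_def, map_smul, smul_eq_mul, h0, mul_zero, add_zero]
      · rw [key s x hx1, hx2, hsc]; ring
    · intro y hy
      simp only [mem_filter, mem_univ, true_and] at hy ⊢
      obtain ⟨hy1, hy2⟩ := hy
      constructor
      · rw [map_add, hy1, ← Algebra.smul_def, map_smul, smul_eq_mul, h0, mul_zero, add_zero]
      · rw [key (-s) y hy1, hy2]
        have : 2 * (-s) * c = ρ' - ρ := by rw [show (2 : ZMod p) * -s * c = -(2 * s * c) by ring, hsc]; ring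
        rw [this]; ring
    · intro x _; rw [map_neg]; ring
    · intro y _; rw [map_neg]; ring
  -- sum over ρ'
  have hsum : (Finset.univ.filter (fun x : F => T x = c)).card =
      ∑ ρ' : ZMod p, (Finset.univ.filter (fun x : F =>
        T x = c ∧ T (a * x ^ 2) = ρ')).card := by
    rw [Finset.card_eq_sum_card_fiberwise
      (f := fun x => T (a * x ^ 2)) (t := Finset.univ) (fun x _ => mem_univ _)]
    congr 1
    ext ρ'
    rw [Finset.filter_filter]
  rw [aux_fiber_card p m F (by omega) hcard c] at hsum
  simp_rw [heq] at hsum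
  rw [Finset.sum_const, Finset.card_univ, ZMod.card, smul_eq_mul] at hsum
  have hp := (Fact.out : p.Prime).pos
  have : p ^ (m - 1) = p * p ^ (m - 2) := by
    conv_lhs => rw [show m - 1 = 1 + (m - 2) by omega]
    rw [pow_add, pow_one]
  rw [this] at hsum
  exact (Nat.eq_of_mul_eq_mul_left hp hsum).symm

end

section
variable (p m : ℕ) [Fact p.Prime] (F : Type) [Field F] [Fintype F] [Algebra (ZMod p) F]

lemma aux_ncard_filter {F : Type} [Fintype F] (P : F → Prop) [DecidablePred P] :
    {x : F | P x}.ncard = (Finset.univ.filter P).card := by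
  rw [Set.ncard_eq_toFinset_card', Set.toFinset_setOf]

lemma aux_split (hp2 : p ≠ 2) (hm : 2 ≤ m) (hcard : Fintype.card F = p ^ m)
    (a : F) (ha : a ≠ 0) (h0 : Algebra.trace (ZMod p) F a⁻¹ = 0) (ρ : ZMod p)
    (P : ZMod p → Prop) [DecidablePred P] (hP0 : ∀ c, P c → c ≠ 0) :
    (Finset.univ.filter (fun x : F => P (Algebra.trace (ZMod p) F x) ∧
      Algebra.trace (ZMod p) F (a * x ^ 2) = ρ)).card =
    (Finset.univ.filter P).card * p ^ (m - 2) := by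
  classical
  set T := Algebra.trace (ZMod p) F with hT
  rw [Finset.card_eq_sum_card_fiberwise (f := fun x => T x)
    (t := Finset.univ.filter P) (fun x hx => by
      exact Finset.mem_filter.mpr ⟨Finset.mem_univ _, (Finset.mem_filter.mp hx).2.1⟩)]
  rw [Finset.sum_congr rfl (fun c hc => ?_), Finset.sum_const, smul_eq_mul]
  simp only [Finset.mem_filter, Finset.mem_univ, true_and] at hc
  have : (Finset.univ.filter (fun x : F => (P (T x) ∧ T (a * x ^ 2) = ρ))).filter
      (fun x => T x = c) =
      Finset.univ.filter (fun x : F => T x = c ∧ T (a * x ^ 2) = ρ) := by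
    ext x
    simp only [Finset.mem_filter, Finset.mem_univ, true_and]
    constructor
    · rintro ⟨⟨_, h2⟩, h3⟩; exact ⟨h3, h2⟩
    · rintro ⟨h1, h2⟩; exact ⟨⟨h1 ▸ hc, h2⟩, h1⟩
  rw [this, aux_A_card p m F hp2 hm hcard a ha h0 c (hP0 c hc) ρ]

end


/-- `N(ρ) = #{x ∈ F_r : Tr(x) ∈ Sq and Tr(a x²) = ρ}`. -/
noncomputable def Nsq' (p : ℕ) (F : Type) [Field F] [Algebra (ZMod p) F]
    (a : F) (ρ : ZMod p) : ℕ :=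
  Set.ncard {x : F | (IsSquare (Algebra.trace (ZMod p) F x) ∧
    Algebra.trace (ZMod p) F x ≠ 0) ∧ Algebra.trace (ZMod p) F (a * x ^ 2) = ρ}

/-- `N_1(ρ) = #{x ∈ F_r : Tr(x) ∈ Nsq and Tr(a x²) = ρ}`. -/
noncomputable def Nnsq (p : ℕ) (F : Type) [Field F] [Algebra (ZMod p) F]
    (a : F) (ρ : ZMod p) : ℕ :=
  Set.ncard {x : F | ¬ IsSquare (Algebra.trace (ZMod p) F x) ∧
    Algebra.trace (ZMod p) F (a * x ^ 2) = ρ}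

/-- if `a ∈ F_r^*` with `Tr(a⁻¹) = 0`, then for every `ρ ∈ F_p^*`
one has `N(ρ) = N_1(ρ) = (p-1)p^{m-2}/2`; moreover
`#{a ∈ F_r^* : Tr(a⁻¹) = 0} = p^{m-1} - 1`. -/
theorem stmt_17 (p m : ℕ) [Fact p.Prime] (hp2 : p ≠ 2) (hm : 2 ≤ m)
    (F : Type) [Field F] [Fintype F] [Algebra (ZMod p) F]
    (hcard : Fintype.card F = p ^ m) :
    (∀ a : F, a ≠ 0 → Algebra.trace (ZMod p) F a⁻¹ = 0 → ∀ ρ : ZMod p, ρ ≠ 0 →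
      Nsq' p F a ρ = (p - 1) / 2 * p ^ (m - 2) ∧
      Nnsq p F a ρ = (p - 1) / 2 * p ^ (m - 2)) ∧
    Set.ncard {a : F | a ≠ 0 ∧ Algebra.trace (ZMod p) F a⁻¹ = 0} = p ^ (m - 1) - 1 := by
  classical
  constructor
  · intro a ha h0 ρ hρ
    constructor
    · rw [Nsq', aux_ncard_filter,
        aux_split p m F hp2 hm hcard a ha h0 ρ (fun c => IsSquare c ∧ c ≠ 0)
          (fun c hc => hc.2),
        (aux_sq_count p hp2).1]
    · rw [Nnsq, aux_ncard_filter,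
        aux_split p m F hp2 hm hcard a ha h0 ρ (fun c => ¬ IsSquare c)
          (fun c hc h => hc (h ▸ ⟨0, by simp⟩)),
        (aux_sq_count p hp2).2]
  · rw [aux_ncard_filter]
    have hb : (Finset.univ.filter (fun a : F => a ≠ 0 ∧ Algebra.trace (ZMod p) F a⁻¹ = 0)).card =
        (Finset.univ.filter (fun b : F => b ≠ 0 ∧ Algebra.trace (ZMod p) F b = 0)).card := by
      refine Finset.card_bij' (fun a _ => a⁻¹) (fun b _ => b⁻¹) ?_ ?_ ?_ ?_
      · intro a ha
        simp only [Finset.mem_filter, Finset.mem_univ, true_and] at ha ⊢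
        exact ⟨inv_ne_zero ha.1, ha.2⟩
      · intro b hb
        simp only [Finset.mem_filter, Finset.mem_univ, true_and] at hb ⊢
        exact ⟨inv_ne_zero hb.1, by rw [inv_inv]; exact hb.2⟩
      · intro a _; simp
      · intro b _; simp
    rw [hb]
    have herase : (Finset.univ.filter (fun b : F => b ≠ 0 ∧ Algebra.trace (ZMod p) F b = 0)) =
        (Finset.univ.filter (fun b : F => Algebra.trace (ZMod p) F b = 0)).erase 0 := by
      ext b
      simp only [Finset.mem_filter, Finset.mem_univ, true_and, Finset.mem_erase]
    rw [herase, Finset.card_erase_of_mem (by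
      simp only [Finset.mem_filter, Finset.mem_univ, true_and, map_zero]),
      aux_fiber_card p m F (by omega) hcard 0]
end
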